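/- Let P(z1,...,zn) be a complex polynomial and Γ1,...,Γn ⊆ ℂ non-empty open connected regions with 0 ∈ closure(Γ1), such that P is nonzero whenever each zℓ ∈ Γℓ. Then the specialization P2(z2,...,zn) = P(0,z2,...,zn) is either nonzero whenever zℓ ∈ Γℓ for ℓ ≥ 2, or identically zero. -/

import Mathlib

open MvPolynomial

theorem my_eval_aeval {σ : Type*} (s : ℂ) (g : σ → Polynomial ℂ) (P : MvPolynomial σ ℂ) :
    Polynomial.eval s (aeval g P) = eval (fun i => Polynomial.eval s (g i)) P := by
  have h := MvPolynomial.eval₂_comp_left (Polynomial.evalRingHom s)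
      (algebraMap ℂ (Polynomial ℂ)) g P
  simp only [Polynomial.coe_evalRingHom] at h
  rw [aeval_def, h, eval]
  congr 1
  ext a
  simp

-- Hurwitz-type key step, one point
theorem keylem (n : ℕ) (P : MvPolynomial (Fin (n+1)) ℂ)
    (Γ : Fin (n+1) → Set ℂ)
    (h0 : (0:ℂ) ∈ closure (Γ 0))
    (hstab : ∀ z : Fin (n+1) → ℂ, (∀ i, z i ∈ Γ i) → eval z P ≠ 0)
    (zs : Fin (n+1) → ℂ) (ρ : ℝ) (hρ : 0 < ρ)
    (hball : ∀ y ∈ Metric.ball zs ρ, ∀ i, i ≠ 0 → y i ∈ Γ i)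
    (hF0 : eval (Function.update zs 0 0) P = 0) :
    ∀ w ∈ Metric.ball zs ρ, eval (Function.update w 0 0) P = 0 := by
  intro w hw
  by_contra hFw
  set v : Fin (n+1) → ℂ := w - zs with hv
  have hvn : ‖v‖ < ρ := by
    rw [Metric.mem_ball, dist_eq_norm] at hw; exact hw
  -- coordinate description
  have hupd : ∀ (t s : ℂ),
      Function.update (zs + s • v) 0 t = fun i => if i = 0 then t else zs i + v i * s := by
    intro t s
    funext i
    rcases eq_or_ne i 0 with rfl | hi
    · simp
    · simp [Function.update_apply, hi, mul_comm]
  -- polynomial family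
  set pt : ℂ → Polynomial ℂ := fun t => aeval
    (fun i : Fin (n+1) => if i = 0 then Polynomial.C t
      else Polynomial.C (zs i) + Polynomial.C (v i) * Polynomial.X) P with hpt
  have hpeval : ∀ t s : ℂ, Polynomial.eval s (pt t) = eval (Function.update (zs + s • v) 0 t) P := by
    intro t s
    rw [hpt, my_eval_aeval, hupd]
    have : (fun i : Fin (n+1) => Polynomial.eval s (if i = 0 then Polynomial.C t
        else Polynomial.C (zs i) + Polynomial.C (v i) * Polynomial.X))
        = fun i => if i = 0 then t else zs i + v i * s := by
      funext i
      rcases eq_or_ne i 0 with rfl | hi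
      · simp
      · simp [hi]
    rw [this]
  -- membership / nonvanishing
  have hmem : ∀ t ∈ Γ 0, ∀ s : ℂ, ‖s‖ ≤ 1 → Polynomial.eval s (pt t) ≠ 0 := by
    intro t ht s hs
    rw [hpeval]
    apply hstab
    intro i
    rcases eq_or_ne i 0 with rfl | hi
    · simpa using ht
    · rw [Function.update_apply, if_neg hi]
      apply hball _ _ i hi
      rw [Metric.mem_ball, dist_eq_norm, add_sub_cancel_left, norm_smul]
      calc ‖s‖ * ‖v‖ ≤ 1 * ‖v‖ := by
            apply mul_le_mul_of_nonneg_right hs (norm_nonneg _)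
        _ < ρ := by rwa [one_mul]
  -- p0 := pt 0
  have hp00 : Polynomial.eval 0 (pt 0) = 0 := by
    rw [hpeval]; simpa using hF0
  have hp01 : Polynomial.eval 1 (pt 0) ≠ 0 := by
    rw [hpeval]
    have : zs + (1:ℂ) • v = w := by simp [hv]
    rwa [this]
  have hp0ne : pt 0 ≠ 0 := fun h => hp01 (by simp [h])
  -- choose radius r avoiding root moduli
  obtain ⟨r, hrIoc, hrT⟩ := (Set.Ioc_infinite (zero_lt_one (α := ℝ))).exists_notMem_finset
      (((pt 0).roots.toFinset).image (fun z : ℂ => ‖z‖))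
  obtain ⟨hr0, hr1⟩ := hrIoc
  have hsphere : ∀ s : ℂ, ‖s‖ = r → Polynomial.eval s (pt 0) ≠ 0 := by
    intro s hs hcon
    apply hrT
    rw [Finset.mem_image]
    refine ⟨s, ?_, by exact hs⟩
    rw [Multiset.mem_toFinset, Polynomial.mem_roots hp0ne]
    exact hcon
  -- min on sphere
  have hspne : (Metric.sphere (0:ℂ) r).Nonempty := NormedSpace.sphere_nonempty.2 hr0.le
  obtain ⟨s₀, hs₀, hmin⟩ := (isCompact_sphere (0:ℂ) r).exists_isMinOn hspne
      ((continuous_norm.comp ((pt 0).continuous)).continuousOn)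
  set m := ‖Polynomial.eval s₀ (pt 0)‖ with hmdef
  have hm0 : 0 < m := by
    rw [hmdef, norm_pos_iff]
    exact hsphere s₀ (by simpa using hs₀)
  set K := (Metric.closedBall (0:ℂ) 1) ×ˢ (Metric.closedBall (0:ℂ) r) with hK
  set GG : ℂ × ℂ → ℂ := fun q => Polynomial.eval q.2 (pt q.1) with hGG
  have hGGc : Continuous GG := by
    have heq : GG = (fun x : Fin (n+1) → ℂ => eval x P) ∘
        (fun q : ℂ × ℂ => fun i => if i = 0 then q.1 else zs i + v i * q.2) := by
      funext q
      show Polynomial.eval q.2 (pt q.1) = _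
      rw [hpeval, hupd]
      rfl
    rw [heq]
    apply (MvPolynomial.continuous_eval P).comp
    apply continuous_pi
    intro i
    rcases eq_or_ne i 0 with rfl | hi
    · simpa using continuous_fst
    · simp only [if_neg hi]
      exact continuous_const.add (continuous_const.mul continuous_snd)
  have hKc : IsCompact K := (isCompact_closedBall _ _).prod (isCompact_closedBall _ _)
  have hUC := hKc.uniformContinuousOn_of_continuous hGGc.continuousOn
  rw [Metric.uniformContinuousOn_iff] at hUC
  obtain ⟨δ, hδ0, hδ⟩ := hUC (m/2) (by positivity)
  obtain ⟨t, htΓ, htd⟩ := Metric.mem_closure_iff.mp h0 (min δ 1) (lt_min hδ0 one_pos)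
  have htn : ‖t‖ < min δ 1 := by rwa [dist_comm, dist_zero_right] at htd
  have ht1 : ‖t‖ ≤ 1 := le_of_lt (lt_of_lt_of_le htn (min_le_right _ _))
  have htδ : ‖t‖ < δ := lt_of_lt_of_le htn (min_le_left _ _)
  have hclose : ∀ s : ℂ, ‖s‖ ≤ r →
      ‖Polynomial.eval s (pt t) - Polynomial.eval s (pt 0)‖ < m/2 := by
    intro s hs
    have h1 : ((t, s) : ℂ × ℂ) ∈ K := by
      rw [hK, Set.mem_prod]
      constructor <;> rw [Metric.mem_closedBall, dist_zero_right]
      · exact ht1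
      · exact hs
    have h2 : ((0, s) : ℂ × ℂ) ∈ K := by
      rw [hK, Set.mem_prod]
      constructor <;> rw [Metric.mem_closedBall, dist_zero_right]
      · simp
      · exact hs
    have hd : dist ((t, s) : ℂ × ℂ) ((0, s) : ℂ × ℂ) < δ := by
      rw [Prod.dist_eq]
      simp only [dist_self, dist_zero_right]
      rw [max_eq_left (norm_nonneg t)]
      exact htδ
    have := hδ (t, s) h1 (0, s) h2 hd
    rwa [dist_eq_norm] at this
  have hlow : ∀ s : ℂ, ‖s‖ = r → m/2 ≤ ‖Polynomial.eval s (pt t)‖ := by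
    intro s hs
    have h1 : m ≤ ‖Polynomial.eval s (pt 0)‖ := hmin (by simpa using hs)
    have h2 := hclose s (le_of_eq hs)
    have h3 := norm_sub_norm_le (Polynomial.eval s (pt 0)) (Polynomial.eval s (pt t))
    rw [norm_sub_rev] at h3
    linarith
  have hφdiff : Differentiable ℂ (fun s => Polynomial.eval s (pt t)) := (pt t).differentiable
  have hφne : ∀ s ∈ Metric.closedBall (0:ℂ) r, Polynomial.eval s (pt t) ≠ 0 := by
    intro s hs
    rw [Metric.mem_closedBall, dist_zero_right] at hs
    exact hmem t htΓ s (le_trans hs hr1)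
  have hdcc : DiffContOnCl ℂ (fun s => (Polynomial.eval s (pt t))⁻¹) (Metric.ball (0:ℂ) r) := by
    constructor
    · intro s hs
      exact ((hφdiff s).inv (hφne s (Metric.ball_subset_closedBall hs))).differentiableWithinAt
    · rw [closure_ball _ (ne_of_gt hr0)]
      exact ContinuousOn.inv₀ (hφdiff.continuous.continuousOn) hφne
  have h0cb : (0:ℂ) ∈ Metric.closedBall (0:ℂ) r := by simp [hr0.le]
  have hbd : ‖(Polynomial.eval 0 (pt t))⁻¹‖ ≤ 2/m := by
    apply Complex.norm_le_of_forall_mem_frontier_norm_le Metric.isBounded_ball hdcc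
    · intro z hz
      rw [frontier_ball _ (ne_of_gt hr0), mem_sphere_zero_iff_norm] at hz
      rw [norm_inv]
      have h1 := hlow z hz
      have h2 : (0:ℝ) < m/2 := by positivity
      calc ‖Polynomial.eval z (pt t)‖⁻¹ ≤ (m/2)⁻¹ := by
            apply inv_anti₀ h2 h1
        _ = 2/m := by rw [inv_div]
    · rw [closure_ball _ (ne_of_gt hr0)]
      exact h0cb
  have hφ0 : m/2 ≤ ‖Polynomial.eval 0 (pt t)‖ := by
    have h0ne := hφne 0 h0cb
    have hx : 0 < ‖Polynomial.eval 0 (pt t)‖ := norm_pos_iff.2 h0ne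
    rw [norm_inv] at hbd
    have h2m : (0:ℝ) < 2/m := by positivity
    have := (inv_le_comm₀ hx h2m).mp hbd
    rwa [inv_div] at this
  have hsmall : ‖Polynomial.eval 0 (pt t)‖ < m/2 := by
    have h1 : ((t, 0) : ℂ × ℂ) ∈ K := by
      rw [hK, Set.mem_prod]
      constructor <;> rw [Metric.mem_closedBall, dist_zero_right]
      · exact ht1
      · simp [hr0.le]
    have h2 : ((0, 0) : ℂ × ℂ) ∈ K := by
      rw [hK, Set.mem_prod]
      constructor <;> rw [Metric.mem_closedBall, dist_zero_right] <;> simp [hr0.le]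
    have hd : dist ((t, 0) : ℂ × ℂ) ((0, 0) : ℂ × ℂ) < δ := by
      rw [Prod.dist_eq]
      simp only [dist_self, dist_zero_right]
      rw [max_eq_left (norm_nonneg t)]
      exact htδ
    have := hδ (t, 0) h1 (0, 0) h2 hd
    show ‖GG (t, 0)‖ < m/2
    calc ‖GG (t, 0)‖ = dist (GG (t, 0)) (GG (0, 0)) := by
          rw [dist_eq_norm]
          congr 1
          have : GG (0, 0) = 0 := hp00
          rw [this, sub_zero]
      _ < m/2 := this
  linarith

/-- Specialization at 0 preserves stability if 0 is in the closure of the region. -/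
theorem stmt1 (n : ℕ) (P : MvPolynomial (Fin (n+1)) ℂ)
    (Γ : Fin (n+1) → Set ℂ)
    (hne : ∀ i, (Γ i).Nonempty) (hopen : ∀ i, IsOpen (Γ i))
    (hconn : ∀ i, IsConnected (Γ i))
    (h0 : (0:ℂ) ∈ closure (Γ 0))
    (hstab : ∀ z : Fin (n+1) → ℂ, (∀ i, z i ∈ Γ i) → eval z P ≠ 0) :
    (∀ z : Fin (n+1) → ℂ, (∀ i, i ≠ 0 → z i ∈ Γ i) →
        eval (Function.update z 0 0) P ≠ 0) ∨
    (∀ z : Fin (n+1) → ℂ, eval (Function.update z 0 0) P = 0) := by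
  by_cases hc : ∀ z : Fin (n+1) → ℂ, (∀ i, i ≠ 0 → z i ∈ Γ i) →
      eval (Function.update z 0 0) P ≠ 0
  · exact Or.inl hc
  · right
    push_neg at hc
    obtain ⟨zs, hzs, hF0⟩ := hc
    have hSopen : IsOpen (Set.pi {i : Fin (n+1) | i ≠ 0} Γ) :=
      isOpen_set_pi (Set.toFinite _) fun i _ => hopen i
    have hzsS : zs ∈ Set.pi {i : Fin (n+1) | i ≠ 0} Γ := fun i hi => hzs i hi
    obtain ⟨ρ, hρ, hball⟩ := Metric.isOpen_iff.mp hSopen zs hzsS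
    have key := keylem n P Γ h0 hstab zs ρ hρ (fun y hy i hi => hball hy i hi) hF0
    intro z
    set u : Fin (n+1) → ℂ := z - zs with hu
    set q : Polynomial ℂ := aeval (fun i : Fin (n+1) => if i = 0 then 0
      else Polynomial.C (zs i) + Polynomial.C (u i) * Polynomial.X) P with hq
    have hqeval : ∀ s : ℂ, Polynomial.eval s q = eval (Function.update (zs + s • u) 0 0) P := by
      intro s
      rw [hq, my_eval_aeval]
      have heq : (fun i : Fin (n+1) => Polynomial.eval s (if i = 0 then 0
          else Polynomial.C (zs i) + Polynomial.C (u i) * Polynomial.X))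
          = Function.update (zs + s • u) 0 0 := by
        funext i
        rcases eq_or_ne i 0 with rfl | hi
        · rw [if_pos rfl, Polynomial.eval_zero, Function.update_self]
        · rw [if_neg hi, Function.update_apply, if_neg hi]
          simp only [Polynomial.eval_add, Polynomial.eval_mul, Polynomial.eval_C,
            Polynomial.eval_X, Pi.add_apply, Pi.smul_apply, smul_eq_mul]
          ring
      rw [heq]
    have hε : (0:ℝ) < ρ / (‖u‖ + 1) := by positivity
    have hqz : ∀ s : ℂ, ‖s‖ < ρ / (‖u‖ + 1) → Polynomial.eval s q = 0 := by
      intro s hs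
      rw [hqeval]
      apply key
      rw [Metric.mem_ball, dist_eq_norm, add_sub_cancel_left, norm_smul]
      have h1 : ‖s‖ * ‖u‖ ≤ ‖s‖ * (‖u‖ + 1) :=
        mul_le_mul_of_nonneg_left (by linarith [norm_nonneg u]) (norm_nonneg s)
      have h2 : ‖s‖ * (‖u‖ + 1) < ρ := by
        rw [← lt_div_iff₀ (by positivity)]
        exact hs
      linarith
    have hq0 : q = 0 := by
      apply Polynomial.eq_zero_of_infinite_isRoot
      apply Set.Infinite.mono (s := Metric.ball (0:ℂ) (ρ / (‖u‖ + 1)))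
      · intro x hx
        rw [Metric.mem_ball, dist_zero_right] at hx
        exact hqz x hx
      · exact infinite_of_mem_nhds (0:ℂ) (Metric.ball_mem_nhds 0 hε)
    have hfin := hqeval 1
    have hz1 : zs + (1:ℂ) • u = z := by simp [hu]
    rw [hq0, hz1] at hfin
    simpa using hfin.symm
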